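/- arXiv:2407.02130 — 2 statements merged into one kernel-verified Lean document; each statement's English description precedes it below -/
import Mathlib

section
/- Let M ⊆ ℂ^d be a domain (nonempty open connected set) and let p ∈ M be a point at which the infinitesimal Kobayashi metric vanishes in every direction, i.e., K_M(p;ξ) = 0 for every ξ ∈ ℂ^d. Then every bounded holomorphic function f : M → ℂ is constant. -/
open Metric Set MeasureTheory Filter
open scoped ENNReal NNReal Topology

noncomputable section

/-- `ℂ^d` with the Euclidean norm. -/
abbrev Cn (d : ℕ) := EuclideanSpace ℂ (Fin d)

/-- The infinitesimal Kobayashi metric of a set `S ⊆ ℂ^d` at a point `p` in the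
direction `ξ`:  the infimum of all `r > 0` such that there is a holomorphic map
`φ : Δ → S` with `φ 0 = p` and `φ' 0 = ξ / r`. -/
def kob {d : ℕ} (S : Set (Cn d)) (p ξ : Cn d) : ℝ :=
  sInf {r : ℝ | 0 < r ∧ ∃ φ : ℂ → Cn d,
    DifferentiableOn ℂ φ (ball 0 1) ∧ MapsTo φ (ball 0 1) S ∧
    φ 0 = p ∧ deriv φ 0 = r⁻¹ • ξ}

/-- A set `Ω ⊆ ℂ^d` has uniform squeezing constant `r > 0` if for every `p ∈ Ω` there
is an injective holomorphic map `f : Ω → B(0;1)` with `f p = 0` and `B(0;r) ⊆ f(Ω)`. -/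
def UnifSqueezing {d : ℕ} (Ω : Set (Cn d)) (r : ℝ) : Prop :=
  ∀ p ∈ Ω, ∃ f : Cn d → Cn d, DifferentiableOn ℂ f Ω ∧ InjOn f Ω ∧
    f p = 0 ∧ f '' Ω ⊆ ball 0 1 ∧ ball 0 r ⊆ f '' Ω

/-- Two sets `U, V ⊆ ℂ^d` are biholomorphic: there is a holomorphic bijection
`U → V` whose inverse is holomorphic. -/
def Biholo {d : ℕ} (U V : Set (Cn d)) : Prop :=
  ∃ f g : Cn d → Cn d, DifferentiableOn ℂ f U ∧ DifferentiableOn ℂ g V ∧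
    MapsTo f U V ∧ MapsTo g V U ∧ (∀ x ∈ U, g (f x) = x) ∧ (∀ y ∈ V, f (g y) = y)

section AuxKobayashi
open Function

/-- iterated dslope based at 0 -/
def dditer (m : ℕ) (g : ℂ → ℂ) : ℂ → ℂ := (fun h => dslope h 0)^[m] g

lemma dditer_succ (m : ℕ) (g : ℂ → ℂ) : dditer (m+1) g = dslope (dditer m g) 0 :=
  Function.iterate_succ_apply' _ _ _

lemma dditer_zero (g : ℂ → ℂ) : dditer 0 g = g := rfl

/-- Schwarz-type max-modulus bound on `dslope`. -/
lemma maxmod {E : Type*} [NormedAddCommGroup E] [NormedSpace ℂ E] {R B : ℝ} (hR : 0 < R)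
    {g : ℂ → E} (hg : DifferentiableOn ℂ g (ball 0 R))
    (hB : ∀ z ∈ ball (0:ℂ) R, ‖g z - g 0‖ ≤ B) {z : ℂ} (hz : z ∈ ball (0:ℂ) R) :
    ‖dslope g 0 z‖ ≤ B / R := by
  have key : ∀ δ : ℝ, 0 < δ → ‖dslope g 0 z‖ ≤ (B + δ * R) / R := by
    intro δ hδ
    refine Complex.norm_dslope_le_div_of_mapsTo_ball hg ?_ hz
    intro w hw
    have h1 := hB w hw
    have h2 : 0 < δ * R := mul_pos hδ hR
    simp only [mem_closedBall, dist_eq_norm]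
    linarith
  refine le_of_forall_pos_le_add fun δ hδ => ?_
  have := key δ hδ
  rw [add_div, mul_div_assoc, div_self hR.ne', mul_one] at this
  exact this

lemma iter_bound {R B : ℝ} (hR : 0 < R) {g : ℂ → ℂ} (hg : DifferentiableOn ℂ g (ball 0 R))
    (hB : ∀ z ∈ ball (0:ℂ) R, ‖g z‖ ≤ B) :
    ∀ m : ℕ, (∀ j < m, dditer j g 0 = 0) →
      DifferentiableOn ℂ (dditer m g) (ball 0 R) ∧
      (∀ z ∈ ball (0:ℂ) R, ‖dditer m g z‖ ≤ B / R ^ m) ∧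
      (∀ z ∈ ball (0:ℂ) R, z ≠ 0 → dditer m g z = g z / z ^ m) := by
  intro m
  induction m with
  | zero =>
    intro _
    refine ⟨hg, fun z hz => by simpa [dditer_zero] using hB z hz, fun z hz hz0 => by simp [dditer_zero]⟩
  | succ m ih =>
    intro hv
    obtain ⟨hdiff, hbd, hform⟩ := ih (fun j hj => hv j (Nat.lt_succ_of_lt hj))
    have h0 : dditer m g 0 = 0 := hv m (Nat.lt_succ_self m)
    have hdiff' : DifferentiableOn ℂ (dditer (m+1) g) (ball 0 R) := by
      rw [dditer_succ]
      exact (Complex.differentiableOn_dslope (ball_mem_nhds _ hR)).mpr hdiff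
    refine ⟨hdiff', ?_, ?_⟩
    · intro z hz
      rw [dditer_succ]
      have := maxmod hR hdiff (fun w hw => by
        rw [h0, sub_zero]; exact hbd w hw) hz
      calc ‖dslope (dditer m g) 0 z‖ ≤ B / R ^ m / R := this
      _ = B / R ^ (m+1) := by rw [div_div, ← pow_succ]
    · intro z hz hz0
      rw [dditer_succ, dslope_of_ne _ hz0, slope_def_field, h0, sub_zero, sub_zero,
        hform z hz hz0]
      rw [div_div, ← pow_succ]

lemma punct_ball {R : ℝ} (hR : 0 < R) :
    ∀ᶠ z in 𝓝[≠] (0:ℂ), z ∈ ball (0:ℂ) R ∧ z ≠ 0 := by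
  filter_upwards [mem_nhdsWithin_of_mem_nhds (isOpen_ball.mem_nhds (mem_ball_self hR)),
    self_mem_nhdsWithin] with z h1 h2
  exact ⟨h1, h2⟩

lemma iter_lim {R B : ℝ} (hR : 0 < R) {g : ℂ → ℂ} (hg : DifferentiableOn ℂ g (ball 0 R))
    (hB : ∀ z ∈ ball (0:ℂ) R, ‖g z‖ ≤ B) (m : ℕ) (hv : ∀ j < m, dditer j g 0 = 0) :
    Tendsto (fun z => g z / z ^ m) (𝓝[≠] (0:ℂ)) (𝓝 (dditer m g 0)) := by
  obtain ⟨hdiff, _, hform⟩ := iter_bound hR hg hB m hv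
  have hc : ContinuousAt (dditer m g) 0 :=
    (hdiff.differentiableAt (isOpen_ball.mem_nhds (mem_ball_self hR))).continuousAt
  have h1 : Tendsto (dditer m g) (𝓝[≠] (0:ℂ)) (𝓝 (dditer m g 0)) :=
    hc.tendsto.mono_left nhdsWithin_le_nhds
  refine h1.congr' ?_
  filter_upwards [punct_ball hR] with z hz
  exact hform z hz.1 hz.2

lemma iter_van {R : ℝ} (hR : 0 < R) :
    ∀ (m : ℕ) (c : ℝ), 0 ≤ c → ∀ (g : ℂ → ℂ), DifferentiableOn ℂ g (ball 0 R) →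
    (∀ z ∈ ball (0:ℂ) R, ‖g z‖ ≤ c * ‖z‖ ^ m) → ∀ j < m, dditer j g 0 = 0 := by
  intro m
  induction m with
  | zero => exact fun c hc g hg hb j hj => absurd hj (Nat.not_lt_zero j)
  | succ m ih =>
    intro c hc g hg hb
    have hb' : ∀ z ∈ ball (0:ℂ) R, ‖g z‖ ≤ (c * R) * ‖z‖ ^ m := by
      intro z hz
      have hzR : ‖z‖ < R := by simpa [mem_ball, dist_eq_norm] using hz
      calc ‖g z‖ ≤ c * ‖z‖^(m+1) := hb z hz
      _ = c * ‖z‖ * ‖z‖^m := by ring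
      _ ≤ c * R * ‖z‖^m := by
          have h1 : c * ‖z‖ ≤ c * R := by
            apply mul_le_mul_of_nonneg_left hzR.le hc
          exact mul_le_mul_of_nonneg_right h1 (pow_nonneg (norm_nonneg z) m)
    have hvm : ∀ j < m, dditer j g 0 = 0 := ih (c*R) (mul_nonneg hc hR.le) g hg hb'
    intro j hj
    rcases Nat.lt_succ_iff_lt_or_eq.mp hj with h | rfl
    · exact hvm j h
    · have hbB : ∀ z ∈ ball (0:ℂ) R, ‖g z‖ ≤ c * R^(j+1) := by
        intro z hz
        have hzR : ‖z‖ < R := by simpa [mem_ball, dist_eq_norm] using hz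
        calc ‖g z‖ ≤ c*‖z‖^(j+1) := hb z hz
        _ ≤ c * R^(j+1) := by
            apply mul_le_mul_of_nonneg_left _ hc
            exact pow_le_pow_left₀ (norm_nonneg z) hzR.le _
      obtain ⟨hdiff, _, hform⟩ := iter_bound hR hg hbB j hvm
      have hc0 : ContinuousAt (dditer j g) 0 :=
        (hdiff.differentiableAt (isOpen_ball.mem_nhds (mem_ball_self hR))).continuousAt
      have h1 : Tendsto (fun z => ‖dditer j g z‖) (𝓝[≠] (0:ℂ)) (𝓝 ‖dditer j g 0‖) :=
        (hc0.tendsto.mono_left nhdsWithin_le_nhds).norm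
      have h2 : Tendsto (fun z : ℂ => c * ‖z‖) (𝓝[≠] (0:ℂ)) (𝓝 0) := by
        have h3 : Tendsto (fun z : ℂ => c * ‖z‖) (𝓝 (0:ℂ)) (𝓝 (c * ‖(0:ℂ)‖)) :=
          (continuous_const.mul continuous_norm).tendsto 0
        simpa using h3.mono_left nhdsWithin_le_nhds
      have hle : ∀ᶠ z in 𝓝[≠] (0:ℂ), ‖dditer j g z‖ ≤ c * ‖z‖ := by
        filter_upwards [punct_ball hR] with z hz
        rw [hform z hz.1 hz.2, norm_div, norm_pow]
        have hz0' : (0:ℝ) < ‖z‖ := norm_pos_iff.mpr hz.2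
        rw [div_le_iff₀ (pow_pos hz0' j)]
        calc ‖g z‖ ≤ c*‖z‖^(j+1) := hb z hz.1
        _ = c*‖z‖ * ‖z‖^j := by ring
      have := le_of_tendsto_of_tendsto h1 h2 hle
      exact norm_le_zero_iff.mp this

/-- differentiability of affine discs -/
lemma affine_diff {d : ℕ} (q v : Cn d) : Differentiable ℂ (fun t : ℂ => q + t • v) :=
  (differentiable_id.smul_const v).const_add q

lemma affine_deriv {d : ℕ} (q v : Cn d) : deriv (fun t : ℂ => q + t • v) 0 = v := by
  have h : HasDerivAt (fun t : ℂ => q + t • v) ((1:ℂ) • v) 0 :=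
    ((hasDerivAt_id (0:ℂ)).smul_const v).const_add q
  simpa using h.deriv

/-- scale-aware Lipschitz estimate from boundedness -/
lemma lip_est {d : ℕ} {F : Cn d → ℂ} {p : Cn d} {s A : ℝ}
    (hs : 0 < s) (hF : DifferentiableOn ℂ F (ball p (2*s)))
    (hA : ∀ q ∈ ball p (2*s), ‖F q‖ ≤ A)
    {x y : Cn d} (hx : x ∈ ball p s) (hy : y ∈ ball p s) :
    ‖F x - F y‖ ≤ (2*A/s) * ‖x - y‖ := by
  have hA0 : 0 ≤ A := le_trans (norm_nonneg _) (hA p (mem_ball_self (by linarith)))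
  have hFx := hA x (ball_subset_ball (by linarith) hx)
  have hFy := hA y (ball_subset_ball (by linarith) hy)
  have hsub : ‖F x - F y‖ ≤ 2*A := by
    calc ‖F x - F y‖ ≤ ‖F x‖ + ‖F y‖ := norm_sub_le _ _
    _ ≤ 2*A := by linarith
  by_cases hbig : s ≤ ‖x - y‖
  · calc ‖F x - F y‖ ≤ 2*A := hsub
    _ = (2*A/s)*s := by field_simp
    _ ≤ (2*A/s)*‖x-y‖ := by
        apply mul_le_mul_of_nonneg_left hbig (by positivity)
  · push_neg at hbig
    rcases eq_or_ne x y with rfl | hxy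
    · rw [sub_self, sub_self, norm_zero, norm_zero, mul_zero]
    have hxy0 : (0:ℝ) < ‖x-y‖ := norm_sub_pos_iff.mpr hxy
    set T := s / ‖x-y‖ with hT
    have hT1 : 1 < T := (one_lt_div hxy0).mpr hbig
    have hT0 : 0 < T := lt_trans one_pos hT1
    set g : ℂ → ℂ := fun t => F (y + t • (x - y)) with hg
    have hmaps : MapsTo (fun t : ℂ => y + t • (x-y)) (ball (0:ℂ) T) (ball p (2*s)) := by
      intro t ht
      have htn : ‖t‖ < T := by simpa [mem_ball, dist_eq_norm] using ht
      have hyp : ‖y - p‖ < s := by simpa [mem_ball, dist_eq_norm] using hy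
      have h1 : ‖y + t•(x-y) - p‖ ≤ ‖y - p‖ + ‖t‖*‖x-y‖ := by
        calc ‖y + t•(x-y) - p‖ = ‖(y - p) + t•(x-y)‖ := by congr 1; abel
        _ ≤ ‖y - p‖ + ‖t•(x-y)‖ := norm_add_le _ _
        _ = ‖y - p‖ + ‖t‖*‖x-y‖ := by rw [norm_smul]
      have h2 : ‖t‖*‖x-y‖ < T*‖x-y‖ := by
        apply mul_lt_mul_of_pos_right htn hxy0
      have h3 : T*‖x-y‖ = s := by rw [hT]; exact div_mul_cancel₀ s hxy0.ne'
      simp only [mem_ball, dist_eq_norm]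
      linarith
    have hgd : DifferentiableOn ℂ g (ball 0 T) :=
      hF.comp (affine_diff y (x-y)).differentiableOn hmaps
    have hgB : ∀ t ∈ ball (0:ℂ) T, ‖g t - g 0‖ ≤ 2*A := by
      intro t ht
      have h1 := hA _ (hmaps ht)
      have h2 := hA _ (hmaps (mem_ball_self hT0))
      calc ‖g t - g 0‖ ≤ ‖g t‖ + ‖g 0‖ := norm_sub_le _ _
      _ ≤ 2*A := by simp only [hg] at *; linarith
    have h1T : (1:ℂ) ∈ ball (0:ℂ) T := by
      simp only [mem_ball, dist_eq_norm, sub_zero]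
      simpa using hT1
    have hkey := maxmod hT0 hgd hgB h1T
    have hval : g 1 - g 0 = ((1:ℂ) - 0) • dslope g 0 1 := (sub_smul_dslope g 0 1).symm
    have hnorm : ‖g 1 - g 0‖ ≤ 2*A/T := by
      rw [hval]
      simpa using hkey
    have hg1 : g 1 = F x := by simp [hg]
    have hg0 : g 0 = F y := by simp [hg]
    rw [hg1, hg0] at hnorm
    calc ‖F x - F y‖ ≤ 2*A/T := hnorm
    _ = (2*A/s) * ‖x-y‖ := by
        rw [hT]
        field_simp

lemma alg1 (k : ℕ) (B K₂ K₃ a n : ℝ) (hK₃ : K₃ ≠ 0) (hn : n ≠ 0) :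
    (2*(B*(a * n^k))/(K₃*n)) * (K₂*n^2) = (2*B*K₂*a/K₃) * n^(k+1) := by
  field_simp
  ring

/-- The key comparison: along a holomorphic disc through `p`, the normalized limit
`F(ψ z)/z^k` exists, is bounded by `B`, and agrees with the limit along the linear disc
in direction `deriv ψ 0`. -/
lemma disc_lim {d : ℕ} {M : Set (Cn d)} {p : Cn d} {F : Cn d → ℂ} {B ε₀ : ℝ} {k : ℕ}
    (hε₀ : 0 < ε₀) (hball : ball p ε₀ ⊆ M) (hB0 : 0 ≤ B)
    (hFdiff : DifferentiableOn ℂ F M) (hFB : ∀ z ∈ M, ‖F z‖ ≤ B)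
    (ihk : ∀ q ∈ ball p ε₀, ‖F q‖ ≤ B * (‖q - p‖/ε₀)^k)
    {ψ : ℂ → Cn d} (hψd : DifferentiableOn ℂ ψ (ball 0 1)) (hψm : MapsTo ψ (ball 0 1) M)
    (hψ0 : ψ 0 = p) :
    ∃ w : ℂ, ‖w‖ ≤ B ∧
      Tendsto (fun z : ℂ => F (p + z • deriv ψ 0) / z^k) (𝓝[≠] (0:ℂ)) (𝓝 w) := by
  set η : Cn d := deriv ψ 0 with hη
  set u : ℂ → Cn d := dslope ψ 0 with hu
  have hud : DifferentiableOn ℂ u (ball 0 1) :=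
    (Complex.differentiableOn_dslope (ball_mem_nhds _ one_pos)).mpr hψd
  set W : ℂ → Cn d := dslope u 0 with hW
  have hWd : DifferentiableOn ℂ W (ball 0 1) :=
    (Complex.differentiableOn_dslope (ball_mem_nhds _ one_pos)).mpr hud
  have hu0 : u 0 = η := dslope_same ψ 0
  set K₁ : ℝ := ‖η‖ + 1 with hK₁
  set K₂ : ℝ := ‖W 0‖ + 1 with hK₂
  set K₃ : ℝ := K₁ + K₂ + 1 with hK₃
  have hK₁0 : 0 < K₁ := by positivity
  have hK₂0 : 0 < K₂ := by positivity
  have hK₃0 : 0 < K₃ := by positivity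
  have hucont : ContinuousAt u 0 :=
    (hud.differentiableAt (isOpen_ball.mem_nhds (mem_ball_self one_pos))).continuousAt
  have hWcont : ContinuousAt W 0 :=
    (hWd.differentiableAt (isOpen_ball.mem_nhds (mem_ball_self one_pos))).continuousAt
  -- eventual bounds
  have E1 : ∀ᶠ z in 𝓝 (0:ℂ), ‖u z‖ ≤ K₁ := by
    filter_upwards [hucont (ball_mem_nhds _ one_pos)] with z hz
    have : ‖u z - u 0‖ < 1 := by simpa [mem_ball, dist_eq_norm] using hz
    calc ‖u z‖ = ‖(u z - u 0) + u 0‖ := by rw [sub_add_cancel]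
    _ ≤ ‖u z - u 0‖ + ‖u 0‖ := norm_add_le _ _
    _ ≤ K₁ := by rw [hu0] at this ⊢; rw [hK₁]; linarith
  have E2 : ∀ᶠ z in 𝓝 (0:ℂ), ‖W z‖ ≤ K₂ := by
    filter_upwards [hWcont (ball_mem_nhds _ one_pos)] with z hz
    have : ‖W z - W 0‖ < 1 := by simpa [mem_ball, dist_eq_norm] using hz
    calc ‖W z‖ = ‖(W z - W 0) + W 0‖ := by rw [sub_add_cancel]
    _ ≤ ‖W z - W 0‖ + ‖W 0‖ := norm_add_le _ _
    _ ≤ K₂ := by rw [hK₂]; linarith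
  have E3 : ∀ᶠ z in 𝓝 (0:ℂ), z ∈ ball (0:ℂ) 1 :=
    isOpen_ball.eventually_mem (mem_ball_self (by norm_num : (0:ℝ) < 1))
  have E4 : ∀ᶠ z in 𝓝 (0:ℂ), ‖z‖ < ε₀/(2*K₃) := by
    have h : ∀ᶠ z in 𝓝 (0:ℂ), z ∈ ball (0:ℂ) (ε₀/(2*K₃)) :=
      isOpen_ball.eventually_mem (mem_ball_self (by positivity))
    filter_upwards [h] with z hz
    simpa [mem_ball, dist_eq_norm] using hz
  have EV : ∀ᶠ z in 𝓝 (0:ℂ), ‖u z‖ ≤ K₁ ∧ ‖W z‖ ≤ K₂ ∧ z ∈ ball (0:ℂ) 1 ∧ ‖z‖ < ε₀/(2*K₃) := by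
    filter_upwards [E1, E2, E3, E4] with z h1 h2 h3 h4; exact ⟨h1, h2, h3, h4⟩
  -- basic identities
  have hxp : ∀ z : ℂ, ψ z - p = z • u z := by
    intro z
    have h := sub_smul_dslope ψ 0 z
    rw [sub_zero, hψ0] at h
    exact h.symm
  have huη : ∀ z : ℂ, u z - η = z • W z := by
    intro z
    have h := sub_smul_dslope u 0 z
    rw [sub_zero, hu0] at h
    exact h.symm
  -- extract a ball for the VAN argument
  obtain ⟨δ, hδ0, hδ⟩ := Metric.eventually_nhds_iff_ball.mp EV
  have hδsub : ball (0:ℂ) δ ⊆ ball (0:ℂ) 1 := fun z hz => (hδ z hz).2.2.1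
  have hcompd : DifferentiableOn ℂ (fun z => F (ψ z)) (ball 0 1) :=
    hFdiff.comp hψd hψm
  have hcompdδ : DifferentiableOn ℂ (fun z => F (ψ z)) (ball 0 δ) := hcompd.mono hδsub
  have hψball : ∀ z ∈ ball (0:ℂ) δ, ψ z ∈ ball p ε₀ ∧ ‖ψ z - p‖ ≤ K₁ * ‖z‖ := by
    intro z hz
    obtain ⟨h1, _, _, h4⟩ := hδ z hz
    have hn : ‖ψ z - p‖ ≤ K₁ * ‖z‖ := by
      rw [hxp z, norm_smul]
      calc ‖z‖ * ‖u z‖ ≤ ‖z‖ * K₁ := by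
            exact mul_le_mul_of_nonneg_left h1 (norm_nonneg z)
      _ = K₁ * ‖z‖ := mul_comm _ _
    refine ⟨?_, hn⟩
    rw [mem_ball, dist_eq_norm]
    have hK13 : K₁ ≤ K₃ := by rw [hK₃]; linarith
    have : K₁ * ‖z‖ ≤ K₃ * ‖z‖ := mul_le_mul_of_nonneg_right hK13 (norm_nonneg z)
    have h5 : K₃ * ‖z‖ < K₃ * (ε₀/(2*K₃)) := by
      exact mul_lt_mul_of_pos_left h4 hK₃0
    have h6 : K₃ * (ε₀/(2*K₃)) = ε₀/2 := by field_simp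
    calc ‖ψ z - p‖ ≤ K₁ * ‖z‖ := hn
    _ ≤ K₃ * ‖z‖ := this
    _ < K₃ * (ε₀/(2*K₃)) := h5
    _ = ε₀/2 := h6
    _ < ε₀ := by linarith
  have hcψ0 : (0:ℝ) ≤ B * (K₁/ε₀)^k := by positivity
  have hcompb : ∀ z ∈ ball (0:ℂ) δ, ‖F (ψ z)‖ ≤ (B * (K₁/ε₀)^k) * ‖z‖^k := by
    intro z hz
    obtain ⟨hmem, hn⟩ := hψball z hz
    calc ‖F (ψ z)‖ ≤ B * (‖ψ z - p‖/ε₀)^k := ihk _ hmem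
    _ ≤ B * ((K₁*‖z‖)/ε₀)^k := by gcongr
    _ = (B * (K₁/ε₀)^k) * ‖z‖^k := by rw [mul_div_right_comm, mul_pow, ← mul_assoc]
  have hvψ : ∀ j < k, dditer j (fun z => F (ψ z)) 0 = 0 :=
    iter_van hδ0 k _ hcψ0 _ hcompdδ hcompb
  have hcompB1 : ∀ z ∈ ball (0:ℂ) 1, ‖F (ψ z)‖ ≤ B := fun z hz => hFB _ (hψm hz)
  have hcompBδ : ∀ z ∈ ball (0:ℂ) δ, ‖F (ψ z)‖ ≤ B := fun z hz => hcompB1 z (hδsub hz)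
  set w : ℂ := dditer k (fun z => F (ψ z)) 0 with hwdef
  have hwB : ‖w‖ ≤ B := by
    obtain ⟨_, hbd, _⟩ := iter_bound one_pos hcompd hcompB1 k hvψ
    have hb0 := hbd 0 (mem_ball_self one_pos)
    rw [← hwdef] at hb0
    simpa using hb0
  have hlimψ : Tendsto (fun z : ℂ => F (ψ z) / z^k) (𝓝[≠] (0:ℂ)) (𝓝 w) :=
    iter_lim hδ0 hcompdδ hcompBδ k hvψ
  set c₃ : ℝ := 2*B*K₂*(2*K₃/ε₀)^k/K₃ with hc₃
  have hdiff_bound : ∀ᶠ z in 𝓝[≠] (0:ℂ),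
      ‖F (p + z • η)/z^k - F (ψ z)/z^k‖ ≤ c₃ * ‖z‖ := by
    filter_upwards [mem_nhdsWithin_of_mem_nhds EV, self_mem_nhdsWithin] with z hzz hz0
    obtain ⟨h1, h2, h3, h4⟩ := hzz
    have hz0' : z ≠ 0 := hz0
    have hzn : (0:ℝ) < ‖z‖ := norm_pos_iff.mpr hz0'
    have hsz0 : (0:ℝ) < K₃ * ‖z‖ := by positivity
    have hle2 : 2*(K₃*‖z‖) ≤ ε₀ := by
      have ha := (lt_div_iff₀ (show (0:ℝ) < 2*K₃ by positivity)).mp h4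
      have hb : ‖z‖*(2*K₃) = 2*(K₃*‖z‖) := by ring
      linarith
    have hsub2 : ball p (2*(K₃*‖z‖)) ⊆ ball p ε₀ := ball_subset_ball hle2
    have hFd2 : DifferentiableOn ℂ F (ball p (2*(K₃*‖z‖))) := hFdiff.mono (hsub2.trans hball)
    have hA2 : ∀ q ∈ ball p (2*(K₃*‖z‖)), ‖F q‖ ≤ B * (2*K₃*‖z‖/ε₀)^k := by
      intro q hq
      have hqlt : ‖q - p‖ < 2*(K₃*‖z‖) := by simpa [mem_ball, dist_eq_norm] using hq
      calc ‖F q‖ ≤ B * (‖q-p‖/ε₀)^k := ihk q (hsub2 hq)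
      _ ≤ B * (2*K₃*‖z‖/ε₀)^k := by
          gcongr
          linarith
    have hx_mem : ψ z ∈ ball p (K₃*‖z‖) := by
      rw [mem_ball, dist_eq_norm, hxp z, norm_smul]
      have : ‖z‖*‖u z‖ ≤ ‖z‖*K₁ := mul_le_mul_of_nonneg_left h1 (norm_nonneg z)
      have hK13 : K₁ < K₃ := by rw [hK₃]; linarith
      have h5 : ‖z‖*K₁ < ‖z‖*K₃ := mul_lt_mul_of_pos_left hK13 hzn
      calc ‖z‖*‖u z‖ ≤ ‖z‖*K₁ := this
      _ < ‖z‖*K₃ := h5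
      _ = K₃*‖z‖ := mul_comm _ _
    have hy_mem : p + z•η ∈ ball p (K₃*‖z‖) := by
      rw [mem_ball, dist_eq_norm, add_sub_cancel_left, norm_smul]
      have hηK : ‖η‖ < K₃ := by rw [hK₃, hK₁]; linarith
      calc ‖z‖*‖η‖ < ‖z‖*K₃ := mul_lt_mul_of_pos_left hηK hzn
      _ = K₃*‖z‖ := mul_comm _ _
    have hlip := lip_est hsz0 hFd2 hA2 hx_mem hy_mem
    have hxy : ψ z - (p + z•η) = z • (z • W z) := by
      calc ψ z - (p + z•η) = (ψ z - p) - z•η := by rw [sub_add_eq_sub_sub]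
      _ = z•(u z) - z•η := by rw [hxp z]
      _ = z•(u z - η) := (smul_sub z _ _).symm
      _ = z•(z • W z) := by rw [huη z]
    have hxy_norm : ‖ψ z - (p + z•η)‖ ≤ K₂ * ‖z‖^2 := by
      rw [hxy, norm_smul, norm_smul]
      calc ‖z‖*(‖z‖*‖W z‖) ≤ ‖z‖*(‖z‖*K₂) := by gcongr
      _ = K₂*‖z‖^2 := by ring
    have hmain : ‖F (ψ z) - F (p + z•η)‖ ≤ c₃ * ‖z‖^(k+1) := by
      have hAz0 : (0:ℝ) ≤ 2*(B * (2*K₃*‖z‖/ε₀)^k)/(K₃*‖z‖) := by positivity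
      calc ‖F (ψ z) - F (p + z•η)‖
          ≤ (2*(B * (2*K₃*‖z‖/ε₀)^k)/(K₃*‖z‖)) * ‖ψ z - (p + z•η)‖ := hlip
      _ ≤ (2*(B * (2*K₃*‖z‖/ε₀)^k)/(K₃*‖z‖)) * (K₂*‖z‖^2) :=
          mul_le_mul_of_nonneg_left hxy_norm hAz0
      _ = c₃ * ‖z‖^(k+1) := by
          have h2K : (2*K₃*‖z‖/ε₀)^k = (2*K₃/ε₀)^k * ‖z‖^k := by
            rw [mul_div_right_comm, mul_pow]
          rw [hc₃, h2K]
          exact alg1 k B K₂ K₃ ((2*K₃/ε₀)^k) ‖z‖ hK₃0.ne' hzn.ne'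
    rw [div_sub_div_same, norm_div, norm_pow]
    rw [div_le_iff₀ (pow_pos hzn k)]
    calc ‖F (p+z•η) - F (ψ z)‖ = ‖F (ψ z) - F (p+z•η)‖ := norm_sub_rev _ _
    _ ≤ c₃ * ‖z‖^(k+1) := hmain
    _ = c₃*‖z‖ * ‖z‖^k := by ring
  have hT3 : Tendsto (fun z : ℂ => F (p + z•η)/z^k - F (ψ z)/z^k) (𝓝[≠] (0:ℂ)) (𝓝 0) := by
    apply squeeze_zero_norm' hdiff_bound
    have hcont : Tendsto (fun z : ℂ => c₃*‖z‖) (𝓝 (0:ℂ)) (𝓝 (c₃*‖(0:ℂ)‖)) :=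
      (continuous_const.mul continuous_norm).tendsto 0
    have h0 : c₃*‖(0:ℂ)‖ = 0 := by rw [norm_zero, mul_zero]
    rw [h0] at hcont
    exact hcont.mono_left nhdsWithin_le_nhds
  refine ⟨w, hwB, ?_⟩
  have hadd := hT3.add hlimψ
  rw [zero_add] at hadd
  refine hadd.congr (fun z => ?_)
  ring

lemma partA {d : ℕ} {M : Set (Cn d)} {p : Cn d} {F : Cn d → ℂ} {B ε₀ : ℝ} {k : ℕ}
    (hε₀ : 0 < ε₀) (hball : ball p ε₀ ⊆ M) (hB0 : 0 ≤ B)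
    (hFdiff : DifferentiableOn ℂ F M) (hFB : ∀ z ∈ M, ‖F z‖ ≤ B) (hFp : F p = 0)
    (hvan : ∀ ξ : Cn d, kob M p ξ = 0)
    (ihk : ∀ q ∈ ball p ε₀, ‖F q‖ ≤ B * (‖q - p‖/ε₀)^k) (ξ : Cn d) :
    Tendsto (fun z : ℂ => F (p + z • ξ) / z^k) (𝓝[≠] (0:ℂ)) (𝓝 0) := by
  rcases Nat.eq_zero_or_pos k with rfl | hk1
  · have hM : M ∈ 𝓝 p := mem_of_superset (ball_mem_nhds p hε₀) hball
    have hFc : ContinuousAt F p := (hFdiff.differentiableAt hM).continuousAt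
    have haff : ContinuousAt (fun z : ℂ => p + z • ξ) 0 :=
      (affine_diff p ξ).continuous.continuousAt
    have hcomp : ContinuousAt (fun z : ℂ => F (p + z • ξ)) 0 := by
      apply ContinuousAt.comp _ haff
      simpa using hFc
    simp only [pow_zero, div_one]
    have h00 : F (p + (0:ℂ) • ξ) = 0 := by rw [zero_smul, add_zero, hFp]
    have ht := hcomp.tendsto
    rw [h00] at ht
    exact ht.mono_left nhdsWithin_le_nhds
  · have hSinf := hvan ξ
    unfold kob at hSinf
    set Sξ := {r : ℝ | 0 < r ∧ ∃ φ : ℂ → Cn d,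
      DifferentiableOn ℂ φ (ball 0 1) ∧ MapsTo φ (ball 0 1) M ∧
      φ 0 = p ∧ deriv φ 0 = r⁻¹ • ξ} with hSdef
    have hSnon : Sξ.Nonempty := by
      have ht0 : (0:ℝ) < ε₀/(2*(‖ξ‖+1)) := by positivity
      set t : ℝ := ε₀/(2*(‖ξ‖+1)) with ht
      refine ⟨t⁻¹, inv_pos.mpr ht0, fun z => p + z • (t • ξ),
        (affine_diff p (t•ξ)).differentiableOn, ?_, by simp, ?_⟩
      · intro z hz
        apply hball
        rw [mem_ball, dist_eq_norm, add_sub_cancel_left, norm_smul, norm_smul]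
        have hz1 : ‖z‖ < 1 := by simpa [mem_ball, dist_eq_norm] using hz
        have htn : ‖t‖ = t := by rw [Real.norm_eq_abs, abs_of_pos ht0]
        rw [htn]
        have h1 : t * ‖ξ‖ < t * (‖ξ‖+1) := by
          apply mul_lt_mul_of_pos_left _ ht0
          linarith
        have h2 : t * (‖ξ‖+1) = ε₀/2 := by rw [ht]; field_simp
        have h3 : ‖z‖ * (t * ‖ξ‖) ≤ 1 * (t*‖ξ‖) := by
          apply mul_le_mul_of_nonneg_right hz1.le (by positivity)
        rw [one_mul] at h3
        calc ‖z‖ * (t * ‖ξ‖) ≤ t*‖ξ‖ := h3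
        _ < t*(‖ξ‖+1) := h1
        _ = ε₀/2 := h2
        _ < ε₀ := by linarith
      · rw [affine_deriv, inv_inv]
    have hSbdd : BddBelow Sξ := ⟨0, fun r hr => hr.1.le⟩
    have exists_r : ∀ ε' : ℝ, 0 < ε' → ∃ r ∈ Sξ, r < ε' := by
      intro ε' hε'
      exact (csInf_lt_iff hSbdd hSnon).mp (by rw [hSinf]; exact hε')
    have getlim : ∀ r ∈ Sξ, ∃ w : ℂ, ‖w‖ ≤ B ∧
        Tendsto (fun z : ℂ => F (p + z • ξ) / z^k) (𝓝[≠] (0:ℂ)) (𝓝 (((r:ℝ) : ℂ)^k * w)) := by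
      intro r hr
      obtain ⟨hr0, ψ, hψd, hψm, hψ0, hψder⟩ := hr
      obtain ⟨w, hwB, hwlim⟩ := disc_lim hε₀ hball hB0 hFdiff hFB ihk hψd hψm hψ0
      refine ⟨w, hwB, ?_⟩
      set ρ : ℂ := ((r:ℝ) : ℂ) with hρ
      have hρ0 : ρ ≠ 0 := by
        rw [hρ]
        exact_mod_cast hr0.ne'
      have hcoe : (r⁻¹ : ℝ) • ξ = ρ⁻¹ • ξ := by
        rw [hρ, ← Complex.ofReal_inv]
        exact (algebraMap_smul ℂ (r⁻¹ : ℝ) ξ).symm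
      have hηξ : ∀ z : ℂ, z • deriv ψ 0 = (z/ρ) • ξ := by
        intro z
        rw [hψder, hcoe, smul_smul, div_eq_mul_inv]
      have hm : Tendsto (fun z : ℂ => ρ * z) (𝓝[≠] (0:ℂ)) (𝓝[≠] (0:ℂ)) := by
        refine tendsto_nhdsWithin_iff.mpr ⟨?_, ?_⟩
        · have hc : Tendsto (fun z : ℂ => ρ*z) (𝓝 0) (𝓝 (ρ*0)) :=
            (continuous_const.mul continuous_id).tendsto 0
          rw [mul_zero] at hc
          exact hc.mono_left nhdsWithin_le_nhds
        · filter_upwards [self_mem_nhdsWithin] with z hz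
          exact mul_ne_zero hρ0 hz
      have h1 : Tendsto (fun z : ℂ => F (p + (ρ*z) • deriv ψ 0)/(ρ*z)^k)
          (𝓝[≠] (0:ℂ)) (𝓝 w) := hwlim.comp hm
      have h2 := h1.const_mul (ρ^k)
      refine h2.congr' ?_
      filter_upwards [self_mem_nhdsWithin] with z hz
      have hz0 : z ≠ (0:ℂ) := hz
      rw [hηξ (ρ*z)]
      have hq : (ρ*z)/ρ = z := by field_simp
      rw [hq, mul_pow]
      have hpk : (ρ:ℂ)^k ≠ 0 := pow_ne_zero k hρ0
      have hzk : z^k ≠ 0 := pow_ne_zero k hz0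
      field_simp
    obtain ⟨r₀, hr₀S, _⟩ := exists_r 1 one_pos
    obtain ⟨w₀, hw₀B, hlim₀⟩ := getlim r₀ hr₀S
    have hLsmall : ∀ ε' : ℝ, 0 < ε' → ε' ≤ 1 → ‖((r₀:ℝ):ℂ)^k * w₀‖ ≤ B * ε' := by
      intro ε' h1 h2
      obtain ⟨r, hrS, hrlt⟩ := exists_r ε' h1
      have hr0 : 0 < r := hrS.1
      obtain ⟨w, hwB, hlim⟩ := getlim r hrS
      have huniq : ((r₀:ℝ):ℂ)^k * w₀ = ((r:ℝ):ℂ)^k * w := tendsto_nhds_unique hlim₀ hlim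
      rw [huniq, norm_mul, norm_pow]
      have hnr : ‖((r:ℝ):ℂ)‖ = r := by
        rw [Complex.norm_real, Real.norm_eq_abs, abs_of_pos hr0]
      rw [hnr]
      have hrk : r^k ≤ r := by
        have := pow_le_pow_of_le_one hr0.le (le_of_lt (lt_of_lt_of_le hrlt h2)) hk1
        simpa using this
      calc r^k * ‖w‖ ≤ r * B := mul_le_mul hrk hwB (norm_nonneg w) hr0.le
      _ = B * r := mul_comm _ _
      _ ≤ B * ε' := mul_le_mul_of_nonneg_left hrlt.le hB0
    have hL0 : ((r₀:ℝ):ℂ)^k * w₀ = 0 := by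
      have hseq : ∀ n : ℕ, ‖((r₀:ℝ):ℂ)^k * w₀‖ ≤ B * (1/(n+1)) := by
        intro n
        apply hLsmall
        · positivity
        · rw [div_le_one (by positivity)]
          norm_num
      have htend : Tendsto (fun n : ℕ => B * (1/(n+1))) atTop (𝓝 0) := by
        have h := tendsto_one_div_add_atTop_nhds_zero_nat (𝕜 := ℝ)
        have h2 := h.const_mul B
        simpa using h2
      have hle := le_of_tendsto_of_tendsto tendsto_const_nhds htend
        (Eventually.of_forall hseq)
      exact norm_le_zero_iff.mp hle
    rw [hL0] at hlim₀
    exact hlim₀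

end AuxKobayashi

/-- If the Kobayashi metric of a domain `M ⊆ ℂ^d` vanishes in every direction at some
point `p ∈ M`, then every bounded holomorphic function on `M` is constant. -/

theorem stmt_3 (d : ℕ) (hd : 1 ≤ d)
    (M : Set (Cn d)) (hMopen : IsOpen M) (hMconn : IsConnected M)
    (p : Cn d) (hp : p ∈ M) (hvan : ∀ ξ : Cn d, kob M p ξ = 0)
    (f : Cn d → ℂ) (hf : DifferentiableOn ℂ f M)
    (hbdd : ∃ C : ℝ, ∀ z ∈ M, ‖f z‖ ≤ C) :
    ∃ c : ℂ, ∀ z ∈ M, f z = c := by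
  classical
  obtain ⟨C, hC⟩ := hbdd
  set F : Cn d → ℂ := fun z => f z - f p with hFdef
  have hFdiff : DifferentiableOn ℂ F M := hf.sub_const (f p)
  set B : ℝ := C + ‖f p‖ with hBdef
  have hFB : ∀ z ∈ M, ‖F z‖ ≤ B := by
    intro z hz
    calc ‖f z - f p‖ ≤ ‖f z‖ + ‖f p‖ := norm_sub_le _ _
    _ ≤ B := by have := hC z hz; rw [hBdef]; linarith
  have hB0 : 0 ≤ B := by
    have h1 := hC p hp
    have h2 := norm_nonneg (f p)
    rw [hBdef]; linarith
  have hFp : F p = 0 := by rw [hFdef]; simp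
  obtain ⟨ε₀, hε₀, hball⟩ := Metric.isOpen_iff.mp hMopen p hp
  -- main induction
  have main : ∀ k : ℕ, ∀ q ∈ ball p ε₀, ‖F q‖ ≤ B * (‖q - p‖/ε₀)^k := by
    intro k
    induction k with
    | zero => intro q hq; simpa using hFB q (hball hq)
    | succ k ihk =>
      have hA := partA hε₀ hball hB0 hFdiff hFB hFp hvan ihk
      intro q hq
      rcases eq_or_ne q p with rfl | hqp
      · simp [hFp]
      · have hu0 : (0:ℝ) < ‖q - p‖ := by
          rw [norm_pos_iff, sub_ne_zero]; exact hqp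
        have hqε : ‖q - p‖ < ε₀ := by simpa [mem_ball, dist_eq_norm] using hq
        have hR1 : 1 < ε₀/‖q-p‖ := (one_lt_div hu0).mpr hqε
        have hR0 : 0 < ε₀/‖q-p‖ := by positivity
        set g : ℂ → ℂ := fun t => F (p + t • (q - p)) with hgdef
        have hmaps : MapsTo (fun t : ℂ => p + t • (q-p)) (ball (0:ℂ) (ε₀/‖q-p‖)) (ball p ε₀) := by
          intro t ht
          have htn : ‖t‖ < ε₀/‖q-p‖ := by simpa [mem_ball, dist_eq_norm] using ht
          rw [mem_ball, dist_eq_norm, add_sub_cancel_left, norm_smul]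
          have h1 : ‖t‖ * ‖q-p‖ < (ε₀/‖q-p‖) * ‖q-p‖ := mul_lt_mul_of_pos_right htn hu0
          have h2 : (ε₀/‖q-p‖) * ‖q-p‖ = ε₀ := by field_simp
          linarith
        have hgd : DifferentiableOn ℂ g (ball 0 (ε₀/‖q-p‖)) :=
          hFdiff.comp (affine_diff p (q-p)).differentiableOn
            (fun t ht => hball (hmaps ht))
        have hgB : ∀ t ∈ ball (0:ℂ) (ε₀/‖q-p‖), ‖g t‖ ≤ B :=
          fun t ht => hFB _ (hball (hmaps ht))
        have hgb : ∀ t ∈ ball (0:ℂ) (ε₀/‖q-p‖), ‖g t‖ ≤ (B * (‖q-p‖/ε₀)^k) * ‖t‖^k := by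
          intro t ht
          have := ihk _ (hmaps ht)
          calc ‖g t‖ ≤ B * (‖p + t•(q-p) - p‖/ε₀)^k := this
          _ = (B * (‖q-p‖/ε₀)^k) * ‖t‖^k := by
              rw [add_sub_cancel_left, norm_smul]
              rw [mul_comm ‖t‖ ‖q-p‖, mul_div_right_comm, mul_pow, ← mul_assoc]
        have hv : ∀ j < k, dditer j g 0 = 0 :=
          iter_van hR0 k _ (by positivity) g hgd hgb
        have hvk : dditer k g 0 = 0 :=
          tendsto_nhds_unique (iter_lim hR0 hgd hgB k hv) (hA (q - p))
        have hv' : ∀ j < k+1, dditer j g 0 = 0 := by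
          intro j hj
          rcases Nat.lt_succ_iff_lt_or_eq.mp hj with h | rfl
          · exact hv j h
          · exact hvk
        obtain ⟨_, hbd, hform⟩ := iter_bound hR0 hgd hgB (k+1) hv'
        have h1mem : (1:ℂ) ∈ ball (0:ℂ) (ε₀/‖q-p‖) := by
          simp only [mem_ball, dist_eq_norm, sub_zero]
          simpa using hR1
        have hb1 := hbd 1 h1mem
        have hf1 := hform 1 h1mem one_ne_zero
        rw [one_pow, div_one] at hf1
        rw [hf1] at hb1
        have hg1 : g 1 = F q := by rw [hgdef]; simp
        rw [hg1] at hb1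
        calc ‖F q‖ ≤ B / (ε₀/‖q-p‖)^(k+1) := hb1
        _ = B * (‖q-p‖/ε₀)^(k+1) := by
            rw [div_pow, div_pow, div_div_eq_mul_div, mul_div_assoc]
  -- F vanishes on the ball
  have hzero : ∀ q ∈ ball p ε₀, F q = 0 := by
    intro q hq
    have hlt : ‖q - p‖/ε₀ < 1 := by
      rw [div_lt_one hε₀]
      simpa [mem_ball, dist_eq_norm] using hq
    have hge : (0:ℝ) ≤ ‖q-p‖/ε₀ := by positivity
    have htend : Tendsto (fun k : ℕ => B*(‖q-p‖/ε₀)^k) atTop (𝓝 0) := by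
      have h := tendsto_pow_atTop_nhds_zero_of_lt_one hge hlt
      have h2 := h.const_mul B
      simpa using h2
    have hle : ‖F q‖ ≤ 0 :=
      le_of_tendsto_of_tendsto tendsto_const_nhds htend
        (Eventually.of_forall fun k => main k q hq)
    simpa using norm_le_zero_iff.mp hle
  -- spreading by the one-variable identity theorem
  set S : Set (Cn d) := {x | ∃ δ : ℝ, 0 < δ ∧ ball x δ ⊆ M ∧ ∀ y ∈ ball x δ, F y = 0}
    with hSdef
  have hSopen : IsOpen S := by
    rw [Metric.isOpen_iff]
    rintro x ⟨δ, hδ0, hδM, hδ0'⟩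
    refine ⟨δ/2, by positivity, ?_⟩
    intro x' hx'
    have hsub : ball x' (δ/2) ⊆ ball x δ := by
      apply ball_subset_ball'
      rw [mem_ball] at hx'
      linarith
    exact ⟨δ/2, by positivity, hsub.trans hδM, fun y hy => hδ0' y (hsub hy)⟩
  have hpS : p ∈ S := ⟨ε₀, hε₀, hball, hzero⟩
  -- extension step
  have hext : ∀ x ∈ M, ∀ ε : ℝ, 0 < ε → ball x ε ⊆ M →
      ∀ y, y ∈ ball x (ε/4) → y ∈ S → ∀ q ∈ ball y (ε/2), F q = 0 := by
    intro x hx ε hε hbx y hyx hyS q hq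
    obtain ⟨δy, hδy0, hδyM, hδy⟩ := hyS
    have hyball : ball y (ε/2) ⊆ ball x ε := by
      apply ball_subset_ball'
      rw [mem_ball] at hyx
      linarith
    have hysubM : ball y (ε/2) ⊆ M := hyball.trans hbx
    rcases eq_or_ne q y with rfl | hqy
    · exact hδy q (mem_ball_self hδy0)
    · have hqy0 : (0:ℝ) < ‖q - y‖ := by
        rw [norm_pos_iff, sub_ne_zero]; exact hqy
      have hqe : ‖q - y‖ < ε/2 := by simpa [mem_ball, dist_eq_norm] using hq
      have hR1 : 1 < (ε/2)/‖q-y‖ := (one_lt_div hqy0).mpr hqe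
      have hR0 : 0 < (ε/2)/‖q-y‖ := by positivity
      set g : ℂ → ℂ := fun t => F (y + t • (q - y)) with hgdef
      have hmaps : MapsTo (fun t : ℂ => y + t • (q-y)) (ball (0:ℂ) ((ε/2)/‖q-y‖)) (ball y (ε/2)) := by
        intro t ht
        have htn : ‖t‖ < (ε/2)/‖q-y‖ := by simpa [mem_ball, dist_eq_norm] using ht
        rw [mem_ball, dist_eq_norm, add_sub_cancel_left, norm_smul]
        calc ‖t‖ * ‖q-y‖ < ((ε/2)/‖q-y‖) * ‖q-y‖ := mul_lt_mul_of_pos_right htn hqy0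
        _ = ε/2 := by field_simp <;> ring
      have hgd : DifferentiableOn ℂ g (ball 0 ((ε/2)/‖q-y‖)) :=
        hFdiff.comp (affine_diff y (q-y)).differentiableOn
          (fun t ht => hysubM (hmaps ht))
      have hgan : AnalyticOnNhd ℂ g (ball 0 ((ε/2)/‖q-y‖)) :=
        hgd.analyticOnNhd isOpen_ball
      have hpre : IsPreconnected (ball (0:ℂ) ((ε/2)/‖q-y‖)) :=
        (convex_ball _ _).isPreconnected
      have h0mem : (0:ℂ) ∈ ball (0:ℂ) ((ε/2)/‖q-y‖) := mem_ball_self hR0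
      have hev : g =ᶠ[𝓝 (0:ℂ)] 0 := by
        have hsm : ∀ᶠ t in 𝓝 (0:ℂ), t ∈ ball (0:ℂ) (δy/‖q-y‖) :=
          isOpen_ball.eventually_mem (mem_ball_self (by positivity))
        filter_upwards [hsm] with t ht
        have htn : ‖t‖ < δy/‖q-y‖ := by simpa [mem_ball, dist_eq_norm] using ht
        apply hδy
        rw [mem_ball, dist_eq_norm, add_sub_cancel_left, norm_smul]
        calc ‖t‖ * ‖q-y‖ < (δy/‖q-y‖) * ‖q-y‖ := mul_lt_mul_of_pos_right htn hqy0
        _ = δy := by field_simp <;> ring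
      have heq := hgan.eqOn_zero_of_preconnected_of_eventuallyEq_zero hpre h0mem hev
      have h1mem : (1:ℂ) ∈ ball (0:ℂ) ((ε/2)/‖q-y‖) := by
        simp only [mem_ball, dist_eq_norm, sub_zero]
        simpa using hR1
      have := heq h1mem
      rw [hgdef] at this
      simpa using this
  -- complement is open
  have hVopen : IsOpen {x | x ∈ M ∧ x ∉ S} := by
    rw [Metric.isOpen_iff]
    rintro x ⟨hxM, hxS⟩
    obtain ⟨ε, hε, hbx⟩ := Metric.isOpen_iff.mp hMopen x hxM
    refine ⟨ε/4, by positivity, ?_⟩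
    intro w hw
    constructor
    · exact hbx (ball_subset_ball (by linarith) hw)
    · intro hwS
      apply hxS
      have hF0 := hext x hxM ε hε hbx w hw hwS
      have hxw : ball x (ε/4) ⊆ ball w (ε/2) := by
        apply ball_subset_ball'
        have h3 := mem_ball.mp hw
        have h4 := dist_comm x w
        linarith
      exact ⟨ε/4, by positivity, (ball_subset_ball (by linarith : ε/4 ≤ ε)).trans hbx,
        fun y hy => hF0 y (hxw hy)⟩
  -- conclude via preconnectedness
  have hconn := hMconn.isPreconnected
  have hcover : M ⊆ S ∪ {x | x ∈ M ∧ x ∉ S} := by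
    intro x hx
    by_cases h : x ∈ S
    · exact Or.inl h
    · exact Or.inr ⟨hx, h⟩
  have hMS : (M ∩ S).Nonempty := ⟨p, hp, hpS⟩
  have hfinal : ∀ z ∈ M, z ∈ S := by
    by_contra hcon
    push_neg at hcon
    obtain ⟨z, hzM, hzS⟩ := hcon
    have hMV : (M ∩ {x | x ∈ M ∧ x ∉ S}).Nonempty := ⟨z, hzM, hzM, hzS⟩
    obtain ⟨y, hyM, hyS, _, hyNS⟩ := hconn S _ hSopen hVopen hcover hMS hMV
    exact hyNS hyS
  refine ⟨f p, fun z hz => ?_⟩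
  obtain ⟨δ, hδ0, _, h0⟩ := hfinal z hz
  have hz0 := h0 z (mem_ball_self hδ0)
  rw [hFdef] at hz0
  simpa [sub_eq_zero] using hz0
end
end

section
/- Let S_n ⊆ ℂ^d be open sets with S_n ⊆ S_{n+1} for all n ≥ 1 and let S = ⋃_{n≥1} S_n. Then for every p ∈ S and ξ ∈ ℂ^d, the sequence n ↦ K_{S_n}(p;ξ) (defined for all n with p ∈ S_n) is nonincreasing and converges to K_S(p;ξ); equivalently, K_S(p;ξ) = inf_n K_{S_n}(p;ξ). -/
open Metric Set MeasureTheory Filter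
open scoped ENNReal NNReal Topology

noncomputable section

/-- The set of admissible scaling constants in the definition of `kob`. -/
def kobSet {d : ℕ} (S : Set (Cn d)) (p ξ : Cn d) : Set ℝ :=
  {r : ℝ | 0 < r ∧ ∃ φ : ℂ → Cn d,
    DifferentiableOn ℂ φ (ball 0 1) ∧ MapsTo φ (ball 0 1) S ∧
    φ 0 = p ∧ deriv φ 0 = r⁻¹ • ξ}

lemma kob_eq_sInf {d : ℕ} (S : Set (Cn d)) (p ξ : Cn d) :
    kob S p ξ = sInf (kobSet S p ξ) := rfl

lemma kobSet_bddBelow {d : ℕ} (S : Set (Cn d)) (p ξ : Cn d) :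
    BddBelow (kobSet S p ξ) := ⟨0, fun _ hr => hr.1.le⟩

lemma kobSet_mono {d : ℕ} {S T : Set (Cn d)} (h : S ⊆ T) (p ξ : Cn d) :
    kobSet S p ξ ⊆ kobSet T p ξ := by
  rintro r ⟨hr, φ, hd, hm, h0, h'⟩
  exact ⟨hr, φ, hd, hm.mono_right h, h0, h'⟩

lemma kobSet_nonempty {d : ℕ} {S : Set (Cn d)} (hS : IsOpen S) {p : Cn d}
    (hp : p ∈ S) (ξ : Cn d) : (kobSet S p ξ).Nonempty := by
  obtain ⟨δ, hδ, hball⟩ := Metric.isOpen_iff.1 hS p hp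
  set ε : ℝ := δ / (‖ξ‖ + 1) with hε
  have hnorm : (0:ℝ) < ‖ξ‖ + 1 := by positivity
  have hεpos : 0 < ε := div_pos hδ hnorm
  have hder : ∀ z : ℂ, HasDerivAt (fun w : ℂ => p + w • (ε • ξ)) (ε • ξ) z := by
    intro z
    simpa using ((hasDerivAt_id z).smul_const (ε • ξ)).const_add p
  have hεδ : ε * (‖ξ‖ + 1) = δ := by
    rw [hε]; field_simp
  refine ⟨ε⁻¹, inv_pos.2 hεpos, fun z => p + z • (ε • ξ), ?_, ?_, by simp, ?_⟩
  · intro z _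
    exact (hder z).differentiableAt.differentiableWithinAt
  · intro z hz
    apply hball
    simp only [mem_ball, dist_zero_right] at hz
    rw [mem_ball, dist_eq_norm, add_sub_cancel_left, norm_smul, norm_smul,
      Real.norm_of_nonneg hεpos.le]
    nlinarith [norm_nonneg ξ, norm_nonneg z, mul_nonneg hεpos.le (norm_nonneg ξ)]
  · rw [(hder 0).deriv, inv_inv]

lemma kob_nonneg {d : ℕ} (S : Set (Cn d)) (p ξ : Cn d) : 0 ≤ kob S p ξ :=
  Real.sInf_nonneg fun _ hr => hr.1.le

lemma kob_mono {d : ℕ} {S T : Set (Cn d)} (h : S ⊆ T) (hS : IsOpen S) {p : Cn d}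
    (hp : p ∈ S) (ξ : Cn d) : kob T p ξ ≤ kob S p ξ :=
  csInf_le_csInf (kobSet_bddBelow T p ξ) (kobSet_nonempty hS hp ξ) (kobSet_mono h p ξ)

/-- Shrinking the disc: any admissible constant for the union gives, after slight
enlargement, an admissible constant for some `S n`. -/
lemma kobSet_shrink {d : ℕ} (S : ℕ → Set (Cn d)) (hSopen : ∀ n, IsOpen (S n))
    (hdir : Directed (· ⊆ ·) S) (p ξ : Cn d) {r t : ℝ}
    (hr : r ∈ kobSet (⋃ n, S n) p ξ) (ht0 : 0 < t) (ht1 : t < 1) :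
    ∃ n, p ∈ S n ∧ r / t ∈ kobSet (S n) p ξ := by
  obtain ⟨hrpos, φ, hφd, hφm, hφ0, hφ'⟩ := hr
  have hsub : closedBall (0:ℂ) t ⊆ ball 0 1 := closedBall_subset_ball ht1
  have hK : IsCompact (φ '' closedBall (0:ℂ) t) :=
    (isCompact_closedBall _ _).image_of_continuousOn (hφd.continuousOn.mono hsub)
  have hKsub : φ '' closedBall (0:ℂ) t ⊆ ⋃ n, S n :=
    (hφm.mono_left hsub).image_subset
  obtain ⟨n, hn⟩ := hK.elim_directed_cover S hSopen hKsub hdir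
  have hmap : MapsTo (fun z => (t:ℂ) * z) (ball 0 1) (closedBall (0:ℂ) t) := by
    intro z hz
    simp only [mem_ball, dist_zero_right] at hz
    simp only [mem_closedBall, dist_zero_right, norm_mul, Complex.norm_real,
      Real.norm_of_nonneg ht0.le]
    nlinarith
  have hp0 : p ∈ S n := hn ⟨0, by simpa using ht0.le, hφ0⟩
  refine ⟨n, hp0, div_pos hrpos ht0, fun z => φ ((t:ℂ) * z), ?_, ?_, by simp [hφ0], ?_⟩
  · exact hφd.comp ((differentiable_id.const_mul _).differentiableOn)
      (fun z hz => hsub (hmap hz))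
  · intro z hz
    exact hn ⟨(t:ℂ) * z, hmap hz, rfl⟩
  · have hφat : HasDerivAt φ (r⁻¹ • ξ) 0 := by
      have := (hφd.differentiableAt (isOpen_ball.mem_nhds (mem_ball_self one_pos))).hasDerivAt
      rwa [hφ'] at this
    have hin : HasDerivAt (fun z : ℂ => (t:ℂ) * z) (t:ℂ) 0 := by
      simpa using (hasDerivAt_id (0:ℂ)).const_mul (t:ℂ)
    have hcomp : HasDerivAt (fun z => φ ((t:ℂ) * z)) ((t:ℂ) • (r⁻¹ • ξ)) 0 := by
      have := HasDerivAt.scomp (0:ℂ) (by simpa using hφat) hin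
      exact this
    rw [hcomp.deriv, Complex.coe_smul, smul_smul]
    congr 1
    field_simp

/-- For an increasing sequence of open sets `Sₙ` with union `S`, the Kobayashi metric
at `p` in direction `ξ` is nonincreasing in `n` and converges to the Kobayashi metric
of `S`; equivalently `K_S(p;ξ) = inf_n K_{Sₙ}(p;ξ)`. -/
theorem stmt_16 (d : ℕ) (hd : 1 ≤ d)
    (S : ℕ → Set (Cn d)) (hSopen : ∀ n, IsOpen (S n))
    (hmono : ∀ n, S n ⊆ S (n + 1))
    (Stot : Set (Cn d)) (hStot : Stot = ⋃ n, S n)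
    (p ξ : Cn d) (hp : p ∈ Stot) :
    (∀ n, p ∈ S n → kob (S (n + 1)) p ξ ≤ kob (S n) p ξ) ∧
    Tendsto (fun n => kob (S n) p ξ) atTop (𝓝 (kob Stot p ξ)) ∧
    kob Stot p ξ = sInf {x : ℝ | ∃ n, p ∈ S n ∧ x = kob (S n) p ξ} := by
  subst hStot
  have hchain : ∀ {m n : ℕ}, m ≤ n → S m ⊆ S n := by
    intro m n h
    induction h with
    | refl => exact subset_rfl
    | step _ ih => exact ih.trans (hmono _)
  have hdir : Directed (· ⊆ ·) S := fun m n =>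
    ⟨max m n, hchain (le_max_left m n), hchain (le_max_right m n)⟩
  have hSub : ∀ n, S n ⊆ ⋃ k, S k := fun n => subset_iUnion S n
  have hTotOpen : IsOpen (⋃ k, S k) := isOpen_iUnion hSopen
  obtain ⟨N, hpN⟩ := mem_iUnion.1 hp
  set I : Set ℝ := {x : ℝ | ∃ n, p ∈ S n ∧ x = kob (S n) p ξ} with hI
  have hIne : I.Nonempty := ⟨kob (S N) p ξ, N, hpN, rfl⟩
  have hIbdd : BddBelow I := ⟨0, by rintro x ⟨n, hpn, rfl⟩; exact kob_nonneg _ _ _⟩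
  have hge : ∀ n, p ∈ S n → kob (⋃ k, S k) p ξ ≤ kob (S n) p ξ := fun n hpn =>
    kob_mono (hSub n) (hSopen n) hpn ξ
  have key : kob (⋃ k, S k) p ξ = sInf I := by
    apply le_antisymm
    · exact le_csInf hIne (by rintro x ⟨n, hpn, rfl⟩; exact hge n hpn)
    · rw [kob_eq_sInf]
      apply le_csInf (kobSet_nonempty hTotOpen hp ξ)
      intro r hr
      have hrpos : 0 < r := hr.1
      apply le_of_forall_pos_le_add
      intro ε hε
      set t : ℝ := r / (r + ε) with htdef
      have ht0 : 0 < t := div_pos hrpos (by linarith)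
      have ht1 : t < 1 := by
        rw [div_lt_one (by linarith)]; linarith
      obtain ⟨n, hpn, hmem⟩ := kobSet_shrink S hSopen hdir p ξ hr ht0 ht1
      have hrt : r / t = r + ε := by
        rw [htdef]; field_simp
      calc sInf I ≤ kob (S n) p ξ := csInf_le hIbdd ⟨n, hpn, rfl⟩
        _ ≤ r / t := csInf_le (kobSet_bddBelow _ p ξ) hmem
        _ = r + ε := hrt
  refine ⟨fun n hpn => kob_mono (hmono n) (hSopen n) hpn ξ, ?_, key⟩
  rw [key]
  refine tendsto_order.2 ⟨?_, ?_⟩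
  · intro a ha
    filter_upwards [eventually_ge_atTop N] with n hn
    have : p ∈ S n := hchain hn hpN
    have := hge n this
    rw [key] at this
    exact lt_of_lt_of_le ha this
  · intro a ha
    obtain ⟨x, ⟨m, hpm, rfl⟩, hxa⟩ := exists_lt_of_csInf_lt hIne ha
    filter_upwards [eventually_ge_atTop m] with n hn
    exact lt_of_le_of_lt (kob_mono (hchain hn) (hSopen m) hpm ξ) hxa
end
end
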